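/- Every complete atomic type (CAT) formula F is either contradictory (unsatisfiable) or logically equivalent to an equality CAT (EQCAT) formula F′ with FV(F′) = FV(F). -/

import Mathlib

/-- An environment (model with variable assignment): interprets unary predicate
symbols from `𝒜`, binary predicate symbols from `ℱ`, and variables from `V`
over the domain `D`. -/
structure Env (𝒜 ℱ V D : Type) where
  un : 𝒜 → D → Prop
  bin : ℱ → D → D → Prop
  var : V → D

variable {𝒜 ℱ V D : Type}

/-- `e.Split e₁ e₂`: the relations of `e` split as a disjoint union into `e₁`
and `e₂`, and the variable assignments agree with those of `e`. -/
def Env.Split (e e₁ e₂ : Env 𝒜 ℱ V D) : Prop :=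
  e₁.var = e.var ∧ e₂.var = e.var ∧
  (∀ A d, (e.un A d ↔ (e₁.un A d ∨ e₂.un A d)) ∧ ¬(e₁.un A d ∧ e₂.un A d)) ∧
  (∀ f d₁ d₂, (e.bin f d₁ d₂ ↔ (e₁.bin f d₁ d₂ ∨ e₂.bin f d₁ d₂)) ∧
      ¬(e₁.bin f d₁ d₂ ∧ e₂.bin f d₁ d₂))

/-- Spatial conjunction of predicates on environments. -/
def spand (P Q : Env 𝒜 ℱ V D → Prop) (e : Env 𝒜 ℱ V D) : Prop :=
  ∃ e₁ e₂, e.Split e₁ e₂ ∧ P e₁ ∧ Q e₂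

/-! ## Syntax and semantics of first-order logic with counting quantifiers -/

/-- Counting quantifier specifications: `∃^{=k}` and `∃^{≥k}`. -/
inductive CQ : Type where
  | exact : ℕ → CQ
  | atLeast : ℕ → CQ
deriving DecidableEq

/-- A counting quantifier specification is satisfied by a cardinality `c`. -/
def CQ.sat : CQ → ℕ → Prop
  | .exact k, c => c = k
  | .atLeast k, c => k ≤ c

/-- `c ∈ C_{k+1}`: `c` is `=i` for some `i ≤ k`, or `≥ k+1`. -/
def CQ.degLE (k : ℕ) : CQ → Prop
  | .exact i => i ≤ k
  | .atLeast i => i = k + 1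

/-- Formulas of first-order predicate calculus with equality and counting
quantifiers, over unary symbols `𝒜`, binary symbols `ℱ`, variables `V`. -/
inductive Fml (𝒜 ℱ V : Type) : Type where
  | un : 𝒜 → V → Fml 𝒜 ℱ V
  | bin : ℱ → V → V → Fml 𝒜 ℱ V
  | eq : V → V → Fml 𝒜 ℱ V
  | fls : Fml 𝒜 ℱ V
  | and : Fml 𝒜 ℱ V → Fml 𝒜 ℱ V → Fml 𝒜 ℱ V
  | or : Fml 𝒜 ℱ V → Fml 𝒜 ℱ V → Fml 𝒜 ℱ V
  | not : Fml 𝒜 ℱ V → Fml 𝒜 ℱ V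
  | cnt : CQ → V → Fml 𝒜 ℱ V → Fml 𝒜 ℱ V

/-- Update the value of a variable in an environment. -/
def Env.updVar [DecidableEq V] (e : Env 𝒜 ℱ V D) (v : V) (d : D) : Env 𝒜 ℱ V D :=
  { e with var := Function.update e.var v d }

/-- Satisfaction of a formula in an environment. -/
def Fml.Sat [DecidableEq V] : Fml 𝒜 ℱ V → Env 𝒜 ℱ V D → Prop
  | .un A v, e => e.un A (e.var v)
  | .bin f v w, e => e.bin f (e.var v) (e.var w)
  | .eq v w, e => e.var v = e.var w
  | .fls, _ => False
  | .and F G, e => F.Sat e ∧ G.Sat e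
  | .or F G, e => F.Sat e ∨ G.Sat e
  | .not F, e => ¬ F.Sat e
  | .cnt c v F, e => c.sat {d : D | F.Sat (e.updVar v d)}.ncard

/-- Quantifier depth; each counting quantifier counts as one quantifier. -/
def Fml.qdepth : Fml 𝒜 ℱ V → ℕ
  | .un _ _ => 0
  | .bin _ _ _ => 0
  | .eq _ _ => 0
  | .fls => 0
  | .and F G => max F.qdepth G.qdepth
  | .or F G => max F.qdepth G.qdepth
  | .not F => F.qdepth
  | .cnt _ _ F => F.qdepth + 1

/-- Free variables of a formula. -/
def Fml.fv [DecidableEq V] : Fml 𝒜 ℱ V → Finset V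
  | .un _ v => {v}
  | .bin _ v w => {v, w}
  | .eq v w => {v, w}
  | .fls => ∅
  | .and F G => F.fv ∪ G.fv
  | .or F G => F.fv ∪ G.fv
  | .not F => F.fv
  | .cnt _ v F => F.fv.erase v

/-- `F.DegLE k`: `F` has counting degree at most `k`, i.e. all counting
quantifiers of `F` are `∃^c` with `c ∈ C_{k+1}`. -/
def Fml.DegLE (k : ℕ) : Fml 𝒜 ℱ V → Prop
  | .un _ _ => True
  | .bin _ _ _ => True
  | .eq _ _ => True
  | .fls => True
  | .and F G => F.DegLE k ∧ G.DegLE k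
  | .or F G => F.DegLE k ∧ G.DegLE k
  | .not F => F.DegLE k
  | .cnt c _ F => c.degLE k ∧ F.DegLE k

/-! ## Atomic formulas, complete atomic types -/

/-- Atomic formulas over unary symbols `𝒜`, binary symbols `ℱ`, variables `V`
(including equality atoms). -/
inductive Atom (𝒜 ℱ V : Type) : Type where
  | un : 𝒜 → V → Atom 𝒜 ℱ V
  | bin : ℱ → V → V → Atom 𝒜 ℱ V
  | eq : V → V → Atom 𝒜 ℱ V
deriving DecidableEq

def Atom.toFml : Atom 𝒜 ℱ V → Fml 𝒜 ℱ V
  | .un A v => .un A v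
  | .bin f v w => .bin f v w
  | .eq v w => .eq v w

/-- The variables occurring in an atomic formula. -/
def Atom.varset [DecidableEq V] : Atom 𝒜 ℱ V → Finset V
  | .un _ v => {v}
  | .bin _ v w => {v, w}
  | .eq v w => {v, w}

/-- Whether an atom is an equality atom. -/
def Atom.isEq : Atom 𝒜 ℱ V → Bool
  | .eq _ _ => true
  | _ => false

def atomEquiv (𝒜 ℱ V : Type) :
    Atom 𝒜 ℱ V ≃ ((𝒜 × V) ⊕ ((ℱ × V × V) ⊕ (V × V))) where
  toFun a := match a with
    | .un A v => Sum.inl (A, v)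
    | .bin f v w => Sum.inr (Sum.inl (f, v, w))
    | .eq v w => Sum.inr (Sum.inr (v, w))
  invFun s := match s with
    | Sum.inl (A, v) => .un A v
    | Sum.inr (Sum.inl (f, v, w)) => .bin f v w
    | Sum.inr (Sum.inr (v, w)) => .eq v w
  left_inv a := by cases a <;> rfl
  right_inv s := by rcases s with ⟨A, v⟩ | ⟨f, v, w⟩ | ⟨v, w⟩ <;> rfl

instance [Fintype 𝒜] [Fintype ℱ] [Fintype V] : Fintype (Atom 𝒜 ℱ V) :=
  Fintype.ofEquiv _ (atomEquiv 𝒜 ℱ V).symm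

/-- Conjunction of a list of formulas (empty conjunction is `¬⊥`, i.e. true). -/
def listConj (l : List (Fml 𝒜 ℱ V)) : Fml 𝒜 ℱ V := l.foldr .and (.not .fls)

/-- Disjunction of a list of formulas (empty disjunction is `⊥`). -/
def listDisj (l : List (Fml 𝒜 ℱ V)) : Fml 𝒜 ℱ V := l.foldr .or .fls

/-- Conjunction of a list of atoms, each taken positively or negatively
according to the sign assignment `σ`. -/
def signedConj (l : List (Atom 𝒜 ℱ V)) (σ : Atom 𝒜 ℱ V → Bool) : Fml 𝒜 ℱ V :=
  listConj (l.map fun a => if σ a then a.toFml else .not a.toFml)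

section AtomicTypes

variable [Fintype 𝒜] [DecidableEq 𝒜] [Fintype ℱ] [DecidableEq ℱ]
  [Fintype V] [DecidableEq V]

/-- The list of all atomic formulas whose variables are among `xs`. -/
noncomputable def atomsOn (𝒜 ℱ : Type) [Fintype 𝒜] [DecidableEq 𝒜] [Fintype ℱ] [DecidableEq ℱ]
    {V : Type} [Fintype V] [DecidableEq V] (xs : Finset V) : List (Atom 𝒜 ℱ V) :=
  (Finset.univ : Finset (Atom 𝒜 ℱ V)).toList.filter fun a => decide (a.varset ⊆ xs)

/-- The complete atomic type (CAT) formula with free variables `{x₁,…,xₙ}`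
(the whole of `V`) determined by a sign assignment `σ`: the conjunction
containing, for each atomic formula `C` over `V`, the conjunct `C` if
`σ C = true` and the conjunct `¬C` otherwise. -/
noncomputable def catFml (σ : Atom 𝒜 ℱ V → Bool) : Fml 𝒜 ℱ V :=
  signedConj (Finset.univ : Finset (Atom 𝒜 ℱ V)).toList σ

/-- The CAT formula over the variable subset `xs` determined by `σ`. -/
noncomputable def gccatFml (xs : Finset V) (σ : Atom 𝒜 ℱ V → Bool) : Fml 𝒜 ℱ V :=
  signedConj (atomsOn 𝒜 ℱ xs) σ

/-- `σ` is a general-case CAT (GCCAT) sign assignment over the variables `xs`: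
the conjunct `xᵢ = xⱼ` occurs (positively) iff `i = j`, and (canonically) `σ`
is `false` outside the atoms over `xs`. -/
noncomputable def gccatSignB (xs : Finset V) (σ : Atom 𝒜 ℱ V → Bool) : Bool :=
  (xs.toList.all fun i => xs.toList.all fun j => σ (.eq i j) == decide (i = j)) &&
  ((Finset.univ : Finset (Atom 𝒜 ℱ V)).toList.all fun a =>
      decide (a.varset ⊆ xs) || !σ a)

/-- `a` is an atom of an `x`-extension: its variables are among `insert x xs`
and `x` actually occurs in it. -/
def isExtAtom (xs : Finset V) (x : V) (a : Atom 𝒜 ℱ V) : Bool :=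
  decide (a.varset ⊆ insert x xs) && decide (x ∈ a.varset)

/-- The list of atoms of `x`-extensions of GCCAT formulas over `xs`. -/
noncomputable def extAtoms (𝒜 ℱ : Type) [Fintype 𝒜] [DecidableEq 𝒜] [Fintype ℱ] [DecidableEq ℱ]
    {V : Type} [Fintype V] [DecidableEq V] (xs : Finset V) (x : V) : List (Atom 𝒜 ℱ V) :=
  (Finset.univ : Finset (Atom 𝒜 ℱ V)).toList.filter (isExtAtom xs x)

/-- The `x`-extension formula determined by a sign assignment `τ`. -/
noncomputable def extFml (xs : Finset V) (x : V) (τ : Atom 𝒜 ℱ V → Bool) : Fml 𝒜 ℱ V :=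
  signedConj (extAtoms 𝒜 ℱ xs x) τ

/-- `τ` is the sign assignment of an `x`-extension of a GCCAT formula over
`xs`: `x = x` positive, `x = xᵢ` and `xᵢ = x` negative, and (canonically) `τ`
is `false` outside extension atoms. -/
noncomputable def extSignB (xs : Finset V) (x : V) (τ : Atom 𝒜 ℱ V → Bool) : Bool :=
  τ (.eq x x) &&
  (xs.toList.all fun v => !τ (.eq x v) && !τ (.eq v x)) &&
  ((Finset.univ : Finset (Atom 𝒜 ℱ V)).toList.all fun a => isExtAtom xs x a || !τ a)

/-- The list of all sign assignments of `x`-extensions over `xs`. -/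
noncomputable def extSigns (𝒜 ℱ : Type) [Fintype 𝒜] [DecidableEq 𝒜] [Fintype ℱ] [DecidableEq ℱ]
    {V : Type} [Fintype V] [DecidableEq V] (xs : Finset V) (x : V) :
    List (Atom 𝒜 ℱ V → Bool) :=
  (Finset.univ : Finset (Atom 𝒜 ℱ V → Bool)).toList.filter (extSignB xs x)

/-- Merge of two sign assignments: the union of their positive literals. -/
def mergeSign (τ₁ τ₂ : Atom 𝒜 ℱ V → Bool) : Atom 𝒜 ℱ V → Bool :=
  fun a => τ₁ a || τ₂ a

end AtomicTypes

/-- `T₁ ⊛ T₂` is defined iff the sets `S(T₁)`, `S(T₂)` of positive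
non-equality literals are disjoint. -/
def MergeOK (τ₁ τ₂ : Atom 𝒜 ℱ V → Bool) : Prop :=
  ∀ a : Atom 𝒜 ℱ V, a.isEq = false → ¬(τ₁ a = true ∧ τ₂ a = true)

/-- The equality CAT (EQCAT) formula determined by: a set `xs` of variables
(the `xᵢ`'s, whose complement is the set of `yⱼ`'s), a map `ι` assigning to
each `y ∉ xs` the variable `x_{i_y} ∈ xs` of its equality conjunct, and a
GCCAT sign assignment `σ` over `xs`:
`⋀_{y ∉ xs} y = ι y  ∧  (GCCAT formula of σ over xs)`. -/
noncomputable def eqcatFml {𝒜 ℱ : Type}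
    [Fintype 𝒜] [DecidableEq 𝒜] [Fintype ℱ] [DecidableEq ℱ] {n : ℕ}
    (xs : Finset (Fin n)) (ι : Fin n → Fin n) (σ : Atom 𝒜 ℱ (Fin n) → Bool) :
    Fml 𝒜 ℱ (Fin n) :=
  (listConj ((((Finset.univ : Finset (Fin n)) \ xs).toList).map fun y =>
      Fml.eq y (ι y))).and (gccatFml xs σ)

/-- The side conditions making `eqcatFml xs ι σ` an EQCAT formula:
every `y ∉ xs` is equated to a variable in `xs`, and `σ` is a GCCAT sign
assignment over `xs`. -/
def IsEqcatData {𝒜 ℱ : Type}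
    [Fintype 𝒜] [DecidableEq 𝒜] [Fintype ℱ] [DecidableEq ℱ] {n : ℕ}
    (xs : Finset (Fin n)) (ι : Fin n → Fin n) (σ : Atom 𝒜 ℱ (Fin n) → Bool) : Prop :=
  (∀ y, y ∉ xs → ι y ∈ xs) ∧ gccatSignB xs σ = true

section MyHelpers

variable {D' : Type}

lemma my_listConj_sat [DecidableEq V] (l : List (Fml 𝒜 ℱ V)) (e : Env 𝒜 ℱ V D') :
    (listConj l).Sat e ↔ ∀ F ∈ l, F.Sat e := by
  induction l with
  | nil => simp [listConj, Fml.Sat]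
  | cons F l ih =>
    simp only [listConj, List.foldr_cons, List.mem_cons] at *
    constructor
    · rintro ⟨h1, h2⟩ G (rfl | hG)
      · exact h1
      · exact ih.mp h2 _ hG
    · intro h
      exact ⟨h F (Or.inl rfl), ih.mpr fun G hG => h G (Or.inr hG)⟩

lemma my_signedConj_sat [DecidableEq V] (l : List (Atom 𝒜 ℱ V))
    (σ : Atom 𝒜 ℱ V → Bool) (e : Env 𝒜 ℱ V D') :
    (signedConj l σ).Sat e ↔ ∀ a ∈ l, (a.toFml.Sat e ↔ σ a = true) := by
  rw [signedConj, my_listConj_sat]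
  constructor
  · intro h a ha
    have := h _ (List.mem_map.mpr ⟨a, ha, rfl⟩)
    cases hs : σ a <;> simp [hs] at this ⊢ <;> simpa [Fml.Sat] using this
  · intro h F hF
    obtain ⟨a, ha, rfl⟩ := List.mem_map.mp hF
    cases hs : σ a <;> simp [hs, Fml.Sat] <;> [exact (h a ha).not.mpr (by simp [hs]);
      exact (h a ha).mpr (by simp [hs])]

lemma my_atom_fv [DecidableEq V] (a : Atom 𝒜 ℱ V) : a.toFml.fv = a.varset := by
  cases a <;> rfl

lemma my_listConj_fv_mem [DecidableEq V] (l : List (Fml 𝒜 ℱ V)) (v : V) :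
    v ∈ (listConj l).fv ↔ ∃ F ∈ l, v ∈ F.fv := by
  induction l with
  | nil => simp [listConj, Fml.fv]
  | cons F l ih =>
    simp only [listConj, List.foldr_cons, Fml.fv, Finset.mem_union, List.mem_cons] at *
    rw [ih]
    constructor
    · rintro (h | ⟨G, hG, hv⟩)
      · exact ⟨F, Or.inl rfl, h⟩
      · exact ⟨G, Or.inr hG, hv⟩
    · rintro ⟨G, (rfl | hG), hv⟩
      · exact Or.inl hv
      · exact Or.inr ⟨G, hG, hv⟩

lemma my_signedConj_fv_mem [DecidableEq V] (l : List (Atom 𝒜 ℱ V))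
    (σ : Atom 𝒜 ℱ V → Bool) (v : V) :
    v ∈ (signedConj l σ).fv ↔ ∃ a ∈ l, v ∈ a.varset := by
  rw [signedConj, my_listConj_fv_mem]
  constructor
  · rintro ⟨F, hF, hv⟩
    obtain ⟨a, ha, rfl⟩ := List.mem_map.mp hF
    refine ⟨a, ha, ?_⟩
    cases hs : σ a <;> simp [hs, Fml.fv, my_atom_fv] at hv <;> exact hv
  · rintro ⟨a, ha, hv⟩
    refine ⟨_, List.mem_map.mpr ⟨a, ha, rfl⟩, ?_⟩
    cases hs : σ a <;> simp [hs, Fml.fv, my_atom_fv] <;> exact hv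

lemma my_mem_atomsOn [Fintype 𝒜] [DecidableEq 𝒜] [Fintype ℱ] [DecidableEq ℱ]
    [Fintype V] [DecidableEq V] {xs : Finset V} {a : Atom 𝒜 ℱ V} :
    a ∈ atomsOn 𝒜 ℱ xs ↔ a.varset ⊆ xs := by
  simp [atomsOn, List.mem_filter]

end MyHelpers

section MyRep

variable {n : ℕ} (σ : Atom 𝒜 ℱ (Fin n) → Bool)
  (href : ∀ v, σ (.eq v v) = true)

noncomputable def myRep (v : Fin n) : Fin n :=
  ((Finset.univ : Finset (Fin n)).filter fun w => σ (.eq v w) = true).min'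
    ⟨v, by simp [href v]⟩

lemma myRep_spec (v : Fin n) : σ (.eq v (myRep σ href v)) = true := by
  have h := Finset.min'_mem
    ((Finset.univ : Finset (Fin n)).filter fun w => σ (.eq v w) = true)
    ⟨v, by simp [href v]⟩
  rw [Finset.mem_filter] at h
  exact h.2

variable (hsymm : ∀ v w, σ (.eq v w) = true → σ (.eq w v) = true)
  (htrans : ∀ u v w, σ (.eq u v) = true → σ (.eq v w) = true → σ (.eq u w) = true)

lemma myRep_le (v w : Fin n) (h : σ (.eq v w) = true) : myRep σ href v ≤ w :=
  Finset.min'_le _ _ (by simp [h])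

include hsymm htrans

lemma myRep_eq_of (v w : Fin n) (h : σ (.eq v w) = true) :
    myRep σ href v = myRep σ href w :=
  le_antisymm
    (myRep_le σ href _ _ (htrans _ _ _ h (myRep_spec σ href w)))
    (myRep_le σ href _ _ (htrans _ _ _ (hsymm _ _ h) (myRep_spec σ href v)))

lemma myRep_idem (v : Fin n) :
    myRep σ href (myRep σ href v) = myRep σ href v :=
  (myRep_eq_of σ href hsymm htrans _ _ (myRep_spec σ href v)).symm

end MyRep

/-- Every complete atomic type (CAT) formula is either
contradictory (unsatisfiable over all finite domains), or logically equivalent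
to an EQCAT formula with the same free variables `{x₁,…,xₙ}`. -/
theorem CAT_contradictory_or_equiv_EQCAT {𝒜 ℱ : Type}
    [Fintype 𝒜] [DecidableEq 𝒜] [Fintype ℱ] [DecidableEq ℱ] {n : ℕ}
    (σ : Atom 𝒜 ℱ (Fin n) → Bool) :
    (∀ (D : Type) [Finite D] (e : Env 𝒜 ℱ (Fin n) D), ¬ (catFml σ).Sat e) ∨
    (∃ (xs : Finset (Fin n)) (ι : Fin n → Fin n) (σ' : Atom 𝒜 ℱ (Fin n) → Bool),
      IsEqcatData xs ι σ' ∧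
      (eqcatFml xs ι σ').fv = (catFml σ).fv ∧
      ∀ (D : Type) [Finite D] (e : Env 𝒜 ℱ (Fin n) D),
        (catFml σ).Sat e ↔ (eqcatFml xs ι σ').Sat e) := by
  by_cases hc : (∀ v, σ (.eq v v) = true) ∧
      (∀ v w, σ (.eq v w) = true → σ (.eq w v) = true) ∧
      (∀ u v w, σ (.eq u v) = true → σ (.eq v w) = true → σ (.eq u w) = true) ∧
      (∀ A v w, σ (.eq v w) = true → σ (.un A v) = σ (.un A w)) ∧
      (∀ f v w v' w', σ (.eq v v') = true → σ (.eq w w') = true →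
        σ (.bin f v w) = σ (.bin f v' w'))
  · right
    obtain ⟨href, hsymm, htrans, hun, hbin⟩ := hc
    set r := myRep σ href with hr
    have hspec : ∀ v, σ (.eq v (r v)) = true := myRep_spec σ href
    have heqof : ∀ v w, σ (.eq v w) = true → r v = r w :=
      myRep_eq_of σ href hsymm htrans
    have hidem : ∀ v, r (r v) = r v := myRep_idem σ href hsymm htrans
    set xs : Finset (Fin n) := Finset.univ.filter (fun v => r v = v) with hxs
    have hmem : ∀ v, v ∈ xs ↔ r v = v := by intro v; simp [hxs]
    have hrx : ∀ v, r v ∈ xs := fun v => (hmem _).mpr (hidem v)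
    have hkey : ∀ v w, σ (.eq v w) = true ↔ r v = r w := by
      intro v w
      constructor
      · exact heqof v w
      · intro h
        have h1 : σ (.eq (r v) w) = true := by
          rw [h]; exact hsymm _ _ (hspec w)
        exact htrans _ _ _ (hspec v) h1
    set σ' : Atom 𝒜 ℱ (Fin n) → Bool :=
      fun a => if a.varset ⊆ xs then σ a else false with hσ'
    have hσ'on : ∀ a : Atom 𝒜 ℱ (Fin n), a.varset ⊆ xs → σ' a = σ a := by
      intro a h; simp [hσ', h]
    have hσ'off : ∀ a : Atom 𝒜 ℱ (Fin n), ¬ a.varset ⊆ xs → σ' a = false := by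
      intro a h; simp [hσ', h]
    refine ⟨xs, r, σ', ⟨fun y _ => hrx y, ?_⟩, ?_, ?_⟩
    · unfold gccatSignB
      rw [Bool.and_eq_true]
      constructor
      · rw [List.all_eq_true]
        intro i hi
        rw [List.all_eq_true]
        intro j hj
        rw [Finset.mem_toList] at hi hj
        have hsub : (Atom.eq i j : Atom 𝒜 ℱ (Fin n)).varset ⊆ xs := by
          simp only [Atom.varset, Finset.insert_subset_iff, Finset.singleton_subset_iff]
          exact ⟨hi, hj⟩
        rw [beq_iff_eq, hσ'on _ hsub]
        by_cases hij : i = j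
        · subst hij; simp [href i]
        · simp only [hij, decide_eq_false, decide_false]
          cases hv : σ (.eq i j)
          · rfl
          · exact absurd
              ((((hmem i).mp hi).symm.trans ((hkey i j).mp hv)).trans ((hmem j).mp hj)) hij
      · rw [List.all_eq_true]
        intro a _
        by_cases h : a.varset ⊆ xs
        · simp [h]
        · simp [h, hσ'off a h]
    · have h1 : (catFml σ).fv = Finset.univ := by
        apply Finset.eq_univ_of_forall
        intro v
        rw [catFml, my_signedConj_fv_mem]
        exact ⟨.eq v v, by simp, by simp [Atom.varset]⟩
      have h2 : (eqcatFml xs r σ').fv = Finset.univ := by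
        apply Finset.eq_univ_of_forall
        intro v
        unfold eqcatFml
        simp only [Fml.fv, Finset.mem_union]
        by_cases hv : v ∈ xs
        · right
          rw [gccatFml, my_signedConj_fv_mem]
          refine ⟨.eq v v, ?_, by simp [Atom.varset]⟩
          rw [my_mem_atomsOn]
          simp only [Atom.varset, Finset.insert_subset_iff, Finset.singleton_subset_iff]
          exact ⟨hv, hv⟩
        · left
          rw [my_listConj_fv_mem]
          refine ⟨.eq v (r v), List.mem_map.mpr ⟨v, ?_, rfl⟩, by simp [Fml.fv]⟩
          simp [hv]
      rw [h1, h2]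
    · intro D _ e
      have hcat : (catFml σ).Sat e ↔
          ∀ a : Atom 𝒜 ℱ (Fin n), (a.toFml.Sat e ↔ σ a = true) := by
        rw [catFml, my_signedConj_sat]
        constructor
        · intro h a; exact h a (by simp)
        · intro h a _; exact h a
      have heqc : (eqcatFml xs r σ').Sat e ↔
          ((∀ y, y ∉ xs → e.var y = e.var (r y)) ∧
           ∀ a : Atom 𝒜 ℱ (Fin n), a.varset ⊆ xs → (a.toFml.Sat e ↔ σ' a = true)) := by
        unfold eqcatFml
        simp only [Fml.Sat]
        rw [my_listConj_sat, gccatFml, my_signedConj_sat]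
        constructor
        · rintro ⟨ha, hb⟩
          refine ⟨fun y hy => ?_, fun a haa => hb a (my_mem_atomsOn.mpr haa)⟩
          have := ha _ (List.mem_map.mpr ⟨y, by simp [hy], rfl⟩)
          simpa [Fml.Sat] using this
        · rintro ⟨ha, hb⟩
          refine ⟨?_, fun a haa => hb a (my_mem_atomsOn.mp haa)⟩
          intro F hF
          obtain ⟨y, hy, rfl⟩ := List.mem_map.mp hF
          simp only [Finset.mem_toList, Finset.mem_sdiff, Finset.mem_univ, true_and] at hy
          simpa [Fml.Sat] using ha y hy
      rw [hcat, heqc]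
      constructor
      · intro K
        have Keq : ∀ v w, (e.var v = e.var w) ↔ σ (.eq v w) = true := fun v w => by
          simpa [Atom.toFml, Fml.Sat] using K (.eq v w)
        refine ⟨fun y _ => (Keq _ _).mpr (hspec y), fun a ha => ?_⟩
        rw [hσ'on a ha]
        exact K a
      · rintro ⟨h1, h2⟩
        have hvar : ∀ v, e.var v = e.var (r v) := by
          intro v
          by_cases hv : v ∈ xs
          · rw [(hmem v).mp hv]
          · exact h1 v hv
        intro a
        cases a with
        | un A v =>
          have hsub : (Atom.un A (r v) : Atom 𝒜 ℱ (Fin n)).varset ⊆ xs := by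
            simp only [Atom.varset, Finset.singleton_subset_iff]; exact hrx v
          have hthis := h2 _ hsub
          rw [hσ'on _ hsub] at hthis
          simp only [Atom.toFml, Fml.Sat] at hthis ⊢
          rw [hvar v, hthis, hun A v (r v) (hspec v)]
        | bin f v w =>
          have hsub : (Atom.bin f (r v) (r w) : Atom 𝒜 ℱ (Fin n)).varset ⊆ xs := by
            simp only [Atom.varset, Finset.insert_subset_iff, Finset.singleton_subset_iff]
            exact ⟨hrx v, hrx w⟩
          have hthis := h2 _ hsub
          rw [hσ'on _ hsub] at hthis
          simp only [Atom.toFml, Fml.Sat] at hthis ⊢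
          rw [hvar v, hvar w, hthis, hbin f v w (r v) (r w) (hspec v) (hspec w)]
        | eq v w =>
          have hsub : (Atom.eq (r v) (r w) : Atom 𝒜 ℱ (Fin n)).varset ⊆ xs := by
            simp only [Atom.varset, Finset.insert_subset_iff, Finset.singleton_subset_iff]
            exact ⟨hrx v, hrx w⟩
          have hthis := h2 _ hsub
          rw [hσ'on _ hsub] at hthis
          simp only [Atom.toFml, Fml.Sat] at hthis ⊢
          rw [hvar v, hvar w, hthis, hkey, hkey, hidem, hidem]
  · left
    intro D _ e hsat
    apply hc
    rw [catFml] at hsat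
    have K : ∀ a : Atom 𝒜 ℱ (Fin n), a.toFml.Sat e ↔ σ a = true := by
      intro a
      exact (my_signedConj_sat _ σ e).mp hsat a (by simp)
    have Keq : ∀ v w, (e.var v = e.var w) ↔ σ (.eq v w) = true := by
      intro v w; simpa [Atom.toFml, Fml.Sat] using K (.eq v w)
    have Kun : ∀ A v, (e.un A (e.var v)) ↔ σ (.un A v) = true := by
      intro A v; simpa [Atom.toFml, Fml.Sat] using K (.un A v)
    have Kbin : ∀ f v w, (e.bin f (e.var v) (e.var w)) ↔ σ (.bin f v w) = true := by
      intro f v w; simpa [Atom.toFml, Fml.Sat] using K (.bin f v w)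
    refine ⟨fun v => (Keq v v).mp rfl,
      fun v w h => (Keq w v).mp ((Keq v w).mpr h).symm,
      fun u v w h1 h2 => (Keq u w).mp (((Keq u v).mpr h1).trans ((Keq v w).mpr h2)),
      fun A v w h => ?_, fun f v w v' w' h1 h2 => ?_⟩
    · have hv : e.var v = e.var w := (Keq v w).mpr h
      rw [Bool.eq_iff_iff, ← Kun A v, ← Kun A w, hv]
    · have hv : e.var v = e.var v' := (Keq v v').mpr h1
      have hw : e.var w = e.var w' := (Keq w w').mpr h2
      rw [Bool.eq_iff_iff, ← Kbin, ← Kbin, hv, hw]
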